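/- The class GPVAL is closed under pointwise multiplication: if I ⊆ ℝ^d is open and connected and f : I → ℝ^e and g : I → ℝ^e both belong to GPVAL, then the componentwise product fg : I → ℝ^e, defined by (fg)(x) = (f₁(x)g₁(x),…,f_e(x)g_e(x)), belongs to GPVAL. -/

import Mathlib

noncomputable section

/-- The continuous linear map `ℝ^d → ℝ^n` associated to an `n × d` real matrix. -/
def matLin {n d : ℕ} (M : Matrix (Fin n) (Fin d) ℝ) : (Fin d → ℝ) →L[ℝ] (Fin n → ℝ) :=
  LinearMap.toContinuousLinearMap (Matrix.toLin' M)

/-- The class `GPVAL` of polynomially bounded generable functions on `I`. -/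
def GPVAL {d e : ℕ} (I : Set (Fin d → ℝ)) (f : (Fin d → ℝ) → (Fin e → ℝ)) : Prop :=
  ∃ (sp : Polynomial ℝ) (n : ℕ) (hn : e ≤ n)
    (p : Matrix (Fin n) (Fin d) (MvPolynomial (Fin n) ℝ))
    (x₀ : Fin d → ℝ) (y₀ : Fin n → ℝ) (y : (Fin d → ℝ) → (Fin n → ℝ)),
    (∀ a : ℝ, 0 ≤ a → 0 ≤ sp.eval a) ∧
    x₀ ∈ I ∧ y x₀ = y₀ ∧
    (∀ x ∈ I, HasFDerivAt y (matLin (fun i j => MvPolynomial.eval (y x) (p i j))) x) ∧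
    (∀ x ∈ I, ∀ i : Fin e, f x i = y x (Fin.castLE hn i)) ∧
    (∀ x ∈ I, ‖y x‖ ≤ sp.eval ‖x‖)

namespace GpvalMulAux

variable {d e n m : ℕ}

/-- Embedding of the `y`-block indices. -/
def iy (e m : ℕ) (i : Fin n) : Fin (e + (n + m)) := Fin.natAdd e (Fin.castAdd m i)

/-- Embedding of the `z`-block indices. -/
def iz (e n : ℕ) (i : Fin m) : Fin (e + (n + m)) := Fin.natAdd e (Fin.natAdd n i)

/-- The combined solution vector: products, then `y`, then `z`. -/
def pw (f g : (Fin d → ℝ) → Fin e → ℝ) (y : (Fin d → ℝ) → Fin n → ℝ)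
    (z : (Fin d → ℝ) → Fin m → ℝ) : (Fin d → ℝ) → Fin (e + (n + m)) → ℝ :=
  fun x => Fin.append (fun i => f x i * g x i) (Fin.append (y x) (z x))

/-- The combined polynomial matrix. -/
def pP (hn : e ≤ n) (hm : e ≤ m)
    (p : Matrix (Fin n) (Fin d) (MvPolynomial (Fin n) ℝ))
    (q : Matrix (Fin m) (Fin d) (MvPolynomial (Fin m) ℝ)) :
    Matrix (Fin (e + (n + m))) (Fin d) (MvPolynomial (Fin (e + (n + m))) ℝ) :=
  Fin.append
    (fun i j => MvPolynomial.X (iy e m (Fin.castLE hn i)) *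
        MvPolynomial.rename (iz e n) (q (Fin.castLE hm i) j) +
      MvPolynomial.X (iz e n (Fin.castLE hm i)) *
        MvPolynomial.rename (iy e m) (p (Fin.castLE hn i) j))
    (Fin.append (fun i j => MvPolynomial.rename (iy e m) (p i j))
      (fun i j => MvPolynomial.rename (iz e n) (q i j)))

@[simp] lemma pw_prod (f g : (Fin d → ℝ) → Fin e → ℝ) (y : (Fin d → ℝ) → Fin n → ℝ)
    (z : (Fin d → ℝ) → Fin m → ℝ) (x : Fin d → ℝ) (i : Fin e) :
    pw f g y z x (Fin.castAdd (n + m) i) = f x i * g x i := by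
  simp [pw]

@[simp] lemma pw_y (f g : (Fin d → ℝ) → Fin e → ℝ) (y : (Fin d → ℝ) → Fin n → ℝ)
    (z : (Fin d → ℝ) → Fin m → ℝ) (x : Fin d → ℝ) (i : Fin n) :
    pw f g y z x (iy e m i) = y x i := by
  simp [pw, iy]

@[simp] lemma pw_z (f g : (Fin d → ℝ) → Fin e → ℝ) (y : (Fin d → ℝ) → Fin n → ℝ)
    (z : (Fin d → ℝ) → Fin m → ℝ) (x : Fin d → ℝ) (i : Fin m) :
    pw f g y z x (iz e n i) = z x i := by
  simp [pw, iz]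

lemma matLin_proj_apply {N : ℕ} (M : Matrix (Fin N) (Fin d) ℝ) (k : Fin N) (v : Fin d → ℝ) :
    (ContinuousLinearMap.proj k ∘L matLin M) v = ∑ j, M k j * v j := by
  simp [matLin, Matrix.toLin'_apply, Matrix.mulVec, dotProduct]

lemma matLin_apply {N : ℕ} (M : Matrix (Fin N) (Fin d) ℝ) (v : Fin d → ℝ) (k : Fin N) :
    matLin M v k = ∑ j, M k j * v j := by
  simp [matLin, Matrix.toLin'_apply, Matrix.mulVec, dotProduct]

end GpvalMulAux

open GpvalMulAux in
/-- **`GPVAL` is closed under componentwise (pointwise) multiplication.** -/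
theorem gpval_mul {d e : ℕ} (I : Set (Fin d → ℝ))
    (hIopen : IsOpen I) (hIconn : IsConnected I)
    (f g : (Fin d → ℝ) → (Fin e → ℝ)) (hf : GPVAL I f) (hg : GPVAL I g) :
    GPVAL I (fun x i => f x i * g x i) := by
  obtain ⟨sp₁, n, hn, p, x₀, y₀, y, hsp₁, hx₀, hy₀, hdy, hfy, hby⟩ := hf
  obtain ⟨sp₂, m, hm, q, x₁, z₀, z, hsp₂, hx₁, hz₀, hdz, hgz, hbz⟩ := hg
  refine ⟨sp₁ * sp₂ + sp₁ + sp₂, e + (n + m), Nat.le_add_right _ _, pP hn hm p q,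
    x₀, pw f g y z x₀, pw f g y z, ?_, hx₀, rfl, ?_, ?_, ?_⟩
  · intro a ha
    have h₁ := hsp₁ a ha
    have h₂ := hsp₂ a ha
    simp only [Polynomial.eval_add, Polynomial.eval_mul]
    positivity
  · -- derivative condition
    intro x hx
    have hwy : pw f g y z x ∘ iy e m = y x := funext fun i => pw_y f g y z x i
    have hwz : pw f g y z x ∘ iz e n = z x := funext fun i => pw_z f g y z x i
    have hy' := hdy x hx
    have hz' := hdz x hx
    rw [hasFDerivAt_pi']
    intro k
    refine Fin.addCases ?_ ?_ k
    · -- product block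
      intro i
      have hyc := hasFDerivAt_pi'.1 hy' (Fin.castLE hn i)
      have hzc := hasFDerivAt_pi'.1 hz' (Fin.castLE hm i)
      have hmul := hyc.mul hzc
      have heq : (fun x' => pw f g y z x' (Fin.castAdd (n + m) i)) =ᶠ[nhds x]
          fun x' => y x' (Fin.castLE hn i) * z x' (Fin.castLE hm i) := by
        filter_upwards [hIopen.mem_nhds hx] with x' hx'
        rw [pw_prod, hfy x' hx' i, hgz x' hx' i]
      refine (hmul.congr_of_eventuallyEq heq).congr_fderiv ?_
      ext v
      erw [matLin_proj_apply]
      have hPk : ∀ j, MvPolynomial.eval (pw f g y z x) (pP hn hm p q (Fin.castAdd (n + m) i) j)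
          = y x (Fin.castLE hn i) * MvPolynomial.eval (z x) (q (Fin.castLE hm i) j)
            + z x (Fin.castLE hm i) * MvPolynomial.eval (y x) (p (Fin.castLE hn i) j) := by
        intro j
        simp only [pP, Fin.append_left, map_add, map_mul, MvPolynomial.eval_X,
          MvPolynomial.eval_rename, hwy, hwz, pw_y, pw_z]
      simp only [hmul, hPk]
      simp [matLin_apply, add_mul, mul_assoc, Finset.sum_add_distrib, Finset.mul_sum]
      erw [matLin_apply, matLin_apply]
      simp only [Finset.mul_sum]
    · intro k'
      refine Fin.addCases ?_ ?_ k'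
      · -- y block
        intro i
        have hyc := hasFDerivAt_pi'.1 hy' i
        have heq : (fun x' => pw f g y z x' (Fin.natAdd e (Fin.castAdd m i)))
            = fun x' => y x' i := funext fun x' => pw_y f g y z x' i
        rw [heq]
        refine hyc.congr_fderiv ?_
        ext v
        erw [matLin_proj_apply, matLin_proj_apply]
        congr 1
        funext j
        have : pP hn hm p q (Fin.natAdd e (Fin.castAdd m i)) j
            = MvPolynomial.rename (iy e m) (p i j) := by
          simp [pP, iy]
        rw [this, MvPolynomial.eval_rename, hwy]
      · -- z block
        intro i
        have hzc := hasFDerivAt_pi'.1 hz' i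
        have heq : (fun x' => pw f g y z x' (Fin.natAdd e (Fin.natAdd n i)))
            = fun x' => z x' i := funext fun x' => pw_z f g y z x' i
        rw [heq]
        refine hzc.congr_fderiv ?_
        ext v
        erw [matLin_proj_apply, matLin_proj_apply]
        congr 1
        funext j
        have : pP hn hm p q (Fin.natAdd e (Fin.natAdd n i)) j
            = MvPolynomial.rename (iz e n) (q i j) := by
          simp [pP, iz]
        rw [this, MvPolynomial.eval_rename, hwz]
  · -- base components
    intro x hx i
    have : Fin.castLE (Nat.le_add_right e (n + m)) i = Fin.castAdd (n + m) i := rfl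
    rw [this, pw_prod]
  · -- bound
    intro x hx
    have h₁ := hby x hx
    have h₂ := hbz x hx
    have hs₁ := hsp₁ ‖x‖ (norm_nonneg x)
    have hs₂ := hsp₂ ‖x‖ (norm_nonneg x)
    simp only [Polynomial.eval_add, Polynomial.eval_mul]
    rw [pi_norm_le_iff_of_nonneg (by positivity)]
    intro k
    refine Fin.addCases ?_ (fun k' => Fin.addCases ?_ ?_ k') k
    · intro i
      rw [pw_prod, hfy x hx i, hgz x hx i]
      have hy1 : |y x (Fin.castLE hn i)| ≤ sp₁.eval ‖x‖ := by
        rw [← Real.norm_eq_abs]; exact (norm_le_pi_norm (y x) _).trans h₁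
      have hz1 : |z x (Fin.castLE hm i)| ≤ sp₂.eval ‖x‖ := by
        rw [← Real.norm_eq_abs]; exact (norm_le_pi_norm (z x) _).trans h₂
      calc ‖y x (Fin.castLE hn i) * z x (Fin.castLE hm i)‖
          = |y x (Fin.castLE hn i)| * |z x (Fin.castLE hm i)| := by
            rw [Real.norm_eq_abs, abs_mul]
        _ ≤ sp₁.eval ‖x‖ * sp₂.eval ‖x‖ :=
            mul_le_mul hy1 hz1 (abs_nonneg _) hs₁
        _ ≤ _ := by linarith
    · intro i
      have : Fin.natAdd e (Fin.castAdd m i) = iy e m i := rfl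
      rw [this, pw_y]
      have : ‖y x i‖ ≤ sp₁.eval ‖x‖ := (norm_le_pi_norm (y x) i).trans h₁
      have hmn : 0 ≤ sp₁.eval ‖x‖ * sp₂.eval ‖x‖ := by positivity
      linarith
    · intro i
      have : Fin.natAdd e (Fin.natAdd n i) = iz e n i := rfl
      rw [this, pw_z]
      have : ‖z x i‖ ≤ sp₂.eval ‖x‖ := (norm_le_pi_norm (z x) i).trans h₂
      have hmn : 0 ≤ sp₁.eval ‖x‖ * sp₂.eval ‖x‖ := by positivity
      linarith
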